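/- Let H and K be real inner product spaces, let X_r ⊆ H be a finite-dimensional subspace with orthonormal basis φ_1, …, φ_r, let P : H → X_r be the orthogonal projection onto X_r, and let D : H → K be a linear map. Let S be the r×r real matrix with entries S_{ij} = ⟨D φ_j, D φ_i⟩_K and let ‖S‖₂ denote its operator norm induced by the Euclidean norm on ℝ^r. Then for all u, w ∈ H, ‖D(u − P u)‖_K ≤ ‖D(u − w)‖_K + ‖D(w − P w)‖_K + sqrt(‖S‖₂)·‖u − w‖_H. -/

import Mathlib

open scoped RealInnerProductSpace

/-- **Decomposition underlying the `H¹`-seminorm ROM projection error bound.**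
Let `H`, `K` be real inner product spaces, `φ 0, …, φ (r-1)` an orthonormal family in `H`
spanning the subspace `Xr`, `P : H → H` the orthogonal projection onto `Xr`
(characterized by `P u ∈ Xr` and `⟪u − P u, v⟫ = 0` for all `v ∈ Xr`),
`D : H → K` a linear map, and `S` the `r × r` matrix with `S i j = ⟪D (φ j), D (φ i)⟫`,
with `‖S‖₂` its operator norm induced by the Euclidean norm on `ℝ^r`.
Then for all `u, w ∈ H`,
`‖D (u − P u)‖ ≤ ‖D (u − w)‖ + ‖D (w − P w)‖ + sqrt(‖S‖₂) ‖u − w‖`. -/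
theorem rom_projection_error_decomposition
    {H K : Type*} [NormedAddCommGroup H] [InnerProductSpace ℝ H]
    [NormedAddCommGroup K] [InnerProductSpace ℝ K]
    (r : ℕ) (φ : Fin r → H) (hφ : Orthonormal ℝ φ)
    (Xr : Submodule ℝ H) (hXr : Xr = Submodule.span ℝ (Set.range φ))
    (P : H → H)
    (hPmem : ∀ u : H, P u ∈ Xr)
    (hPorth : ∀ u : H, ∀ v ∈ Xr, ⟪u - P u, v⟫ = 0)
    (D : H →ₗ[ℝ] K)
    (S : Matrix (Fin r) (Fin r) ℝ)
    (hS : ∀ i j, S i j = ⟪D (φ j), D (φ i)⟫)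
    (u w : H) :
    ‖D (u - P u)‖ ≤ ‖D (u - w)‖ + ‖D (w - P w)‖
        + Real.sqrt ‖Matrix.toEuclideanCLM (𝕜 := ℝ) S‖ * ‖u - w‖ := by
  haveI hfin : FiniteDimensional ℝ Xr := by
    rw [hXr]; exact FiniteDimensional.span_of_finite ℝ (Set.finite_range φ)
  have hP : ∀ x : H, P x = (Submodule.orthogonalProjection Xr x : H) := fun x =>
    (Xr.eq_starProjection_of_mem_of_inner_eq_zero (hPmem x) (hPorth x)).symm
  set nS : ℝ := ‖Matrix.toEuclideanCLM (𝕜 := ℝ) S‖ with hnS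
  -- inverse estimate
  have key : ∀ v ∈ Xr, ‖D v‖ ≤ Real.sqrt nS * ‖v‖ := by
    intro v hv
    rw [hXr] at hv
    obtain ⟨c, rfl⟩ := (Submodule.mem_span_range_iff_exists_fun ℝ).1 hv
    set x : EuclideanSpace ℝ (Fin r) := (WithLp.equiv 2 _).symm c with hx
    have hxnorm : ‖x‖ ^ 2 = ‖∑ i, c i • φ i‖ ^ 2 := by
      rw [← real_inner_self_eq_norm_sq, ← real_inner_self_eq_norm_sq, hφ.inner_sum]
      simp [hx, PiLp.inner_apply, RCLike.inner_apply, mul_comm, EuclideanSpace.norm_sq_eq, ← pow_two]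
    have hDv : ⟪D (∑ i, c i • φ i), D (∑ i, c i • φ i)⟫ =
        ⟪Matrix.toEuclideanCLM (𝕜 := ℝ) S x, x⟫ := by
      rw [map_sum]
      simp only [map_smul, inner_sum, sum_inner, inner_smul_left, inner_smul_right,
        RCLike.star_def, starRingEnd_apply, star_trivial]
      have : Matrix.toEuclideanCLM (𝕜 := ℝ) S x = (WithLp.equiv 2 _).symm (S.mulVec c) := by
        rw [hx]
        simp [Matrix.toLin'_apply]
      rw [this]
      simp only [PiLp.inner_apply, RCLike.inner_apply, starRingEnd_apply, star_trivial,
        WithLp.equiv_symm_apply, WithLp.ofLp_toLp, Matrix.mulVec, dotProduct, hS, hx]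
      refine Finset.sum_congr rfl fun i _ => ?_
      simp only [Finset.mul_sum]
      exact Finset.sum_congr rfl fun j _ => by ring
    have hle : ‖D (∑ i, c i • φ i)‖ ^ 2 ≤ nS * ‖∑ i, c i • φ i‖ ^ 2 := by
      rw [← real_inner_self_eq_norm_sq, hDv, ← hxnorm]
      calc ⟪Matrix.toEuclideanCLM (𝕜 := ℝ) S x, x⟫
          ≤ ‖Matrix.toEuclideanCLM (𝕜 := ℝ) S x‖ * ‖x‖ := real_inner_le_norm _ _
        _ ≤ (nS * ‖x‖) * ‖x‖ := by
            exact mul_le_mul_of_nonneg_right ((Matrix.toEuclideanCLM (𝕜 := ℝ) S).le_opNorm x)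
              (norm_nonneg _)
        _ = nS * ‖x‖ ^ 2 := by ring
    have h0 : (0:ℝ) ≤ nS := norm_nonneg _
    calc ‖D (∑ i, c i • φ i)‖ = Real.sqrt (‖D (∑ i, c i • φ i)‖ ^ 2) := by
          rw [Real.sqrt_sq (norm_nonneg _)]
      _ ≤ Real.sqrt (nS * ‖∑ i, c i • φ i‖ ^ 2) := Real.sqrt_le_sqrt hle
      _ = Real.sqrt nS * ‖∑ i, c i • φ i‖ := by
          rw [Real.sqrt_mul h0, Real.sqrt_sq (norm_nonneg _)]
  -- contraction
  have hcontr : ‖P w - P u‖ ≤ ‖u - w‖ := by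
    rw [hP, hP]
    have : (Submodule.orthogonalProjection Xr w : H) - Submodule.orthogonalProjection Xr u =
        (Submodule.orthogonalProjection Xr (w - u) : H) := by
      rw [map_sub]; rfl
    rw [this]
    calc ‖(Submodule.orthogonalProjection Xr (w - u) : H)‖ = ‖Submodule.orthogonalProjection Xr (w - u)‖ := rfl
      _ ≤ ‖w - u‖ := by
          simpa using (Submodule.orthogonalProjection Xr).le_opNorm_of_le
            (le_refl ‖w - u‖) |>.trans (by
              nlinarith [Submodule.orthogonalProjection_norm_le Xr, norm_nonneg (w - u)])
      _ = ‖u - w‖ := norm_sub_rev _ _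
  -- decomposition
  have hdecomp : u - P u = (u - w) + (w - P w) + (P w - P u) := by abel
  calc ‖D (u - P u)‖ = ‖D (u - w) + D (w - P w) + D (P w - P u)‖ := by
        rw [hdecomp, map_add, map_add]
    _ ≤ ‖D (u - w)‖ + ‖D (w - P w)‖ + ‖D (P w - P u)‖ := norm_add₃_le
    _ ≤ ‖D (u - w)‖ + ‖D (w - P w)‖ + Real.sqrt nS * ‖u - w‖ := by
        have hmem : P w - P u ∈ Xr := sub_mem (hPmem w) (hPmem u)
        have := key _ hmem
        have h2 : Real.sqrt nS * ‖P w - P u‖ ≤ Real.sqrt nS * ‖u - w‖ :=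
          mul_le_mul_of_nonneg_left hcontr (Real.sqrt_nonneg _)
        linarith
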